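/- arXiv:2507.07842 — 8 statements merged into one kernel-verified Lean document; each statement's English description precedes it below -/
import Mathlib

section
/- (Singleton-like bound for rank-metric codes) If C ⊆ F_q^{m×n} is a set of matrices such that any two distinct elements A, B ∈ C satisfy rank(A−B) ≥ d, where 1 ≤ d ≤ min{m,n}, then |C| ≤ q^{max{m,n}·(min{m,n} − d + 1)}. -/
open Matrix Finset

/-- If all rows of `D` outside a finset `t` vanish, then the rank of `D` is at
most `t.card`. -/
lemma rank_le_card_support_rows {F : Type*} [Field F] {m n : ℕ}
    (D : Matrix (Fin m) (Fin n) F) (t : Finset (Fin m))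
    (h : ∀ i ∉ t, D i = 0) : D.rank ≤ t.card := by
  classical
  rw [Matrix.rank_eq_finrank_span_row]
  have h1 : Submodule.span F (Set.range D) ≤
      Submodule.span F ((t.image D : Finset (Fin n → F)) : Set (Fin n → F)) := by
    rw [Submodule.span_le]
    rintro _ ⟨i, rfl⟩
    by_cases hi : i ∈ t
    · exact Submodule.subset_span (Finset.mem_coe.2 (Finset.mem_image_of_mem D hi))
    · rw [h i hi]; exact Submodule.zero_mem _
  calc Module.finrank F (Submodule.span F (Set.range D))
      ≤ Module.finrank F (Submodule.span F
          ((t.image D : Finset (Fin n → F)) : Set (Fin n → F))) :=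
        Submodule.finrank_mono h1
    _ ≤ (t.image D).card := finrank_span_finset_le_card _
    _ ≤ t.card := Finset.card_image_le

/-- Singleton bound in the case where we puncture the row side. -/
lemma singleton_bound_aux (F : Type*) [Field F] [Fintype F] (m n d : ℕ)
    (hd1 : 1 ≤ d) (hdm : d ≤ m)
    (C : Finset (Matrix (Fin m) (Fin n) F))
    (hC : ∀ A ∈ C, ∀ B ∈ C, A ≠ B → d ≤ (A - B).rank) :
    C.card ≤ (Fintype.card F) ^ (n * (m - d + 1)) := by
  classical
  -- projection onto the first `m - d + 1` rows
  set f : Matrix (Fin m) (Fin n) F → (Fin (m - d + 1) → Fin n → F) :=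
    fun A i j => A ⟨i.1, by have := i.isLt; omega⟩ j with hf
  have hinj : Set.InjOn f (C : Set (Matrix (Fin m) (Fin n) F)) := by
    intro A hA B hB hAB
    by_contra hne
    have hrank : d ≤ (A - B).rank := hC A hA B hB hne
    -- the difference is supported on the last `d - 1` rows
    set t : Finset (Fin m) :=
      (Finset.univ : Finset (Fin (d - 1))).image
        (fun j => (⟨m - d + 1 + j.1, by have := j.isLt; omega⟩ : Fin m)) with ht
    have hsupp : ∀ i ∉ t, (A - B) i = 0 := by
      intro i hi
      have hlt : (i : ℕ) < m - d + 1 := by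
        by_contra hge
        push_neg at hge
        apply hi
        rw [ht]
        refine Finset.mem_image.2 ⟨⟨(i : ℕ) - (m - d + 1), ?_⟩, Finset.mem_univ _, ?_⟩
        · have := i.isLt; omega
        · ext
          simp only
          omega
      funext j
      have h2 := congrFun (congrFun hAB ⟨(i : ℕ), hlt⟩) j
      simp only [hf] at h2
      rw [Fin.eta] at h2
      simp [Matrix.sub_apply, h2]
    have hle : (A - B).rank ≤ t.card := rank_le_card_support_rows _ t hsupp
    have htc : t.card ≤ d - 1 := by
      calc t.card ≤ (Finset.univ : Finset (Fin (d - 1))).card := Finset.card_image_le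
        _ = d - 1 := by simp
    omega
  have hcard : C.card ≤ Fintype.card (Fin (m - d + 1) → Fin n → F) := by
    rw [← Finset.card_univ]
    exact Finset.card_le_card_of_injOn f (fun a _ => Finset.mem_univ _) hinj
  calc C.card ≤ Fintype.card (Fin (m - d + 1) → Fin n → F) := hcard
    _ = (Fintype.card F) ^ (n * (m - d + 1)) := by
        simp [Fintype.card_fun, ← pow_mul]

/-- Singleton-like bound for rank-metric codes: if any two distinct matrices in
`C ⊆ F_q^{m×n}` differ by a matrix of rank at least `d`, with `1 ≤ d ≤ min m n`,
then `|C| ≤ q^{max{m,n}·(min{m,n} − d + 1)}`. -/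
theorem stmt3 (F : Type*) [Field F] [Fintype F] (m n d : ℕ)
    (hd1 : 1 ≤ d) (hd : d ≤ min m n)
    (C : Finset (Matrix (Fin m) (Fin n) F))
    (hC : ∀ A ∈ C, ∀ B ∈ C, A ≠ B → d ≤ (A - B).rank) :
    C.card ≤ (Fintype.card F) ^ (max m n * (min m n - d + 1)) := by
  classical
  rcases le_total m n with h | h
  · rw [min_eq_left h, max_eq_right h]
    exact singleton_bound_aux F m n d hd1 (le_trans hd (min_le_left m n)) C hC
  · rw [min_eq_right h, max_eq_left h]
    set C' : Finset (Matrix (Fin n) (Fin m) F) := C.image Matrix.transpose with hC'def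
    have hcard : C'.card = C.card :=
      Finset.card_image_of_injective C Matrix.transpose_injective
    have hC' : ∀ A ∈ C', ∀ B ∈ C', A ≠ B → d ≤ (A - B).rank := by
      intro A' hA' B' hB' hne
      obtain ⟨A, hA, rfl⟩ := Finset.mem_image.1 hA'
      obtain ⟨B, hB, rfl⟩ := Finset.mem_image.1 hB'
      have hAB : A ≠ B := fun hEq => hne (by rw [hEq])
      rw [← Matrix.transpose_sub, Matrix.rank_transpose]
      exact hC A hA B hB hAB
    have := singleton_bound_aux F n m d hd1 (le_trans hd (min_le_right m n)) C' hC'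
    rwa [hcard] at this
end

section
/- If U and V are k-dimensional subspaces of F_q^n whose reduced row echelon form generator matrices have the same pivot column set (i.e., equal identifying vectors), then d_S(U,V) = 2·rank(C_U − C_V), where C_U and C_V are the submatrices of the RREF generator matrices of U and V obtained by deleting the pivot columns. -/
open Module Matrix

/-- `M` is in reduced row echelon form with pivot columns given by `p`. -/
def IsRREF {F : Type*} [Field F] {k n : ℕ}
    (M : Matrix (Fin k) (Fin n) F) (p : Fin k → Fin n) : Prop :=
  StrictMono p ∧ (∀ i, M i (p i) = 1) ∧
    (∀ (i : Fin k) (j : Fin n), (j : ℕ) < (p i : ℕ) → M i j = 0) ∧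
    (∀ i i', i' ≠ i → M i' (p i) = 0)

lemma rref_pivot {F : Type*} [Field F] {k n : ℕ} {M : Matrix (Fin k) (Fin n) F}
    {p : Fin k → Fin n} (hM : IsRREF M p) (i j : Fin k) :
    M i (p j) = if i = j then 1 else 0 := by
  split
  · subst ‹i = j›; exact hM.2.1 i
  · exact hM.2.2.2 j i ‹i ≠ j›

lemma rref_li {F : Type*} [Field F] {k n : ℕ} {M : Matrix (Fin k) (Fin n) F}
    {p : Fin k → Fin n} (hM : IsRREF M p) :
    LinearIndependent F (fun i => M i) := by
  rw [Fintype.linearIndependent_iff]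
  intro g h i
  have := congrFun h (p i)
  simpa [Finset.sum_apply, rref_pivot hM, Finset.sum_ite_eq'] using this

lemma rref_finrank_span {F : Type*} [Field F] {k n : ℕ}
    {M : Matrix (Fin k) (Fin n) F} {p : Fin k → Fin n} (hM : IsRREF M p) :
    finrank F (Submodule.span F (Set.range fun i => M i)) = k := by
  have h := rref_li hM
  rw [finrank_span_eq_card h]
  simp

lemma inf_span_eq_bot {F : Type*} [Field F] {k n : ℕ}
    {M D : Matrix (Fin k) (Fin n) F} {p : Fin k → Fin n} (hM : IsRREF M p)
    (hDp : ∀ i j, D i (p j) = 0) :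
    Submodule.span F (Set.range fun i => M i)
      ⊓ Submodule.span F (Set.range fun i => D i) = ⊥ := by
  rw [eq_bot_iff]
  rintro v ⟨hv1, hv2⟩
  have hz : ∀ j, v (p j) = 0 := by
    intro j
    have hle : Submodule.span F (Set.range fun i => D i)
        ≤ LinearMap.ker (LinearMap.proj (p j) : (Fin n → F) →ₗ[F] F) := by
      rw [Submodule.span_le]
      rintro _ ⟨i, rfl⟩
      simp [LinearMap.mem_ker, hDp]
    exact hle hv2
  obtain ⟨c, hc⟩ := (Submodule.mem_span_range_iff_exists_fun F).mp hv1
  have hc0 : ∀ j, c j = 0 := by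
    intro j
    have h2 : (∑ i, c i • M i) (p j) = v (p j) := congrFun hc (p j)
    rw [hz j] at h2
    simpa [Finset.sum_apply, rref_pivot hM, Finset.sum_ite_eq'] using h2
  have : v = 0 := by rw [← hc]; simp [hc0]
  simp [this]

lemma rank_submatrix_eq {F : Type*} [Field F] {k n : ℕ}
    {D : Matrix (Fin k) (Fin n) F} {p : Fin k → Fin n}
    (hDp : ∀ i j, D i (p j) = 0)
    (e : Fin (n - k) → Fin n) (hre : Set.range e = (Set.range p)ᶜ) :
    D.rank = (D.submatrix id e).rank := by
  have hspan : Submodule.span F (Set.range Dᵀ)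
      = Submodule.span F (Set.range (D.submatrix id e)ᵀ) := by
    apply le_antisymm
    · rw [Submodule.span_le]
      rintro _ ⟨j, rfl⟩
      by_cases hj : j ∈ Set.range p
      · obtain ⟨i, rfl⟩ := hj
        have : Dᵀ (p i) = 0 := by ext i'; exact hDp i' i
        rw [this]; exact Submodule.zero_mem _
      · have : j ∈ Set.range e := by rw [hre]; exact hj
        obtain ⟨j', rfl⟩ := this
        exact Submodule.subset_span ⟨j', rfl⟩
    · rw [Submodule.span_le]
      rintro _ ⟨j, rfl⟩
      exact Submodule.subset_span ⟨e j, rfl⟩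
  rw [Matrix.rank_eq_finrank_span_cols, Matrix.rank_eq_finrank_span_cols]
  change finrank F (Submodule.span F (Set.range Dᵀ)) = finrank F (Submodule.span F (Set.range (D.submatrix id e)ᵀ))
  rw [hspan]

lemma sup_span_eq {F : Type*} [Field F] {k n : ℕ}
    (M N : Matrix (Fin k) (Fin n) F) :
    Submodule.span F (Set.range fun i => M i)
        ⊔ Submodule.span F (Set.range fun i => N i)
      = Submodule.span F (Set.range fun i => M i)
        ⊔ Submodule.span F (Set.range fun i => (M - N) i) := by
  apply le_antisymm
  · apply sup_le le_sup_left
    rw [Submodule.span_le]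
    rintro _ ⟨i, rfl⟩
    show N i ∈ _
    have h : N i = M i - (M - N) i := by ext j; simp
    rw [h]
    exact Submodule.sub_mem _
      (Submodule.mem_sup_left (Submodule.subset_span ⟨i, rfl⟩))
      (Submodule.mem_sup_right (Submodule.subset_span ⟨i, rfl⟩))
  · apply sup_le le_sup_left
    rw [Submodule.span_le]
    rintro _ ⟨i, rfl⟩
    show (M - N) i ∈ _
    have h : (M - N) i = M i - N i := by ext j; simp
    rw [h]
    exact Submodule.sub_mem _
      (Submodule.mem_sup_left (Submodule.subset_span ⟨i, rfl⟩))
      (Submodule.mem_sup_right (Submodule.subset_span ⟨i, rfl⟩))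

lemma finrank_sup_eq {F : Type*} [Field F] {k n : ℕ}
    {M N : Matrix (Fin k) (Fin n) F} {p : Fin k → Fin n}
    (hM : IsRREF M p) (hN : IsRREF N p) :
    finrank F ↥(Submodule.span F (Set.range fun i => M i)
        ⊔ Submodule.span F (Set.range fun i => N i))
      = k + (M - N).rank := by
  rw [sup_span_eq M N]
  have hDp : ∀ i j, (M - N) i (p j) = 0 := by
    intro i j
    simp [Matrix.sub_apply, rref_pivot hM, rref_pivot hN]
  have h := Submodule.finrank_sup_add_finrank_inf_eq
    (Submodule.span F (Set.range fun i => M i))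
    (Submodule.span F (Set.range fun i => (M - N) i))
  rw [inf_span_eq_bot hM hDp] at h
  simp only [finrank_bot, add_zero] at h
  rw [h, rref_finrank_span hM, Matrix.rank_eq_finrank_span_row]
  rfl

/-- If `U` and `V` are `k`-dimensional subspaces of `F_q^n` whose RREF generator
matrices have the same pivot columns, then
`d_S(U,V) = 2·rank(C_U − C_V)` where `C_U`, `C_V` are the submatrices obtained
by deleting the pivot columns. -/
theorem stmt4 (F : Type*) [Field F] [Fintype F] (n k : ℕ)
    (U V : Submodule F (Fin n → F))
    (M N : Matrix (Fin k) (Fin n) F) (p : Fin k → Fin n)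
    (hM : IsRREF M p) (hN : IsRREF N p)
    (hU : Submodule.span F (Set.range fun i => M i) = U)
    (hV : Submodule.span F (Set.range fun i => N i) = V)
    (e : Fin (n - k) → Fin n) (he : Function.Injective e)
    (hre : Set.range e = (Set.range p)ᶜ) :
    finrank F ↥(U ⊔ V) - finrank F ↥(U ⊓ V)
      = 2 * (M.submatrix id e - N.submatrix id e).rank := by
  have hDp : ∀ i j, (M - N) i (p j) = 0 := by
    intro i j
    simp [Matrix.sub_apply, rref_pivot hM, rref_pivot hN]
  have hsub : M.submatrix id e - N.submatrix id e = (M - N).submatrix id e := by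
    ext i j; simp
  have hsupfin : finrank F ↥(U ⊔ V) = k + (M - N).rank := by
    rw [← hU, ← hV]; exact finrank_sup_eq hM hN
  have hUk : finrank F ↥U = k := by rw [← hU]; exact rref_finrank_span hM
  have hVk : finrank F ↥V = k := by rw [← hV]; exact rref_finrank_span hN
  have hsum := Submodule.finrank_sup_add_finrank_inf_eq U V
  rw [hsupfin, hUk, hVk] at hsum
  have hrk : (M - N).rank ≤ k :=
    (Matrix.rank_le_card_height (M - N)).trans (by simp)
  rw [hsub, ← rank_submatrix_eq hDp e hre, hsupfin]
  show k + (M - N).rank - finrank F ↥(U ⊓ V) = 2 * (M - N).rank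
  have hsum' : k + (M - N).rank + finrank F ↥(U ⊓ V) = k + k := hsum
  have hrk' : (M - N).rank ≤ k := hrk
  omega
end

section
/- For any two k-dimensional subspaces U, V of F_q^n, the subspace distance is at least the Hamming distance of their identifying vectors: d_S(U,V) ≥ d_H(i(U), i(V)). -/
open Module

/-- The identifying vector: the binary indicator of the pivot columns. -/
def pivotVec {k n : ℕ} (p : Fin k → Fin n) : Fin n → Bool :=
  fun j => decide (∃ i, p i = j)

/-- A family of vectors with distinct "leading" positions is linearly independent. -/
theorem li_of_leading {F : Type*} [Field F] {n : ℕ} {ι : Type*} (v : ι → Fin n → F)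
    (r : ι → Fin n) (hr : Function.Injective r)
    (h1 : ∀ i, v i (r i) ≠ 0)
    (h0 : ∀ (i : ι) (j : Fin n), (j : ℕ) < (r i : ℕ) → v i j = 0) :
    LinearIndependent F v := by
  classical
  rw [linearIndependent_iff']
  intro s
  induction s using Finset.strongInduction with
  | _ s ih =>
    intro c hsum i hi
    obtain ⟨i₀, hi₀, hmin⟩ := s.exists_min_image (fun i => (r i : ℕ)) ⟨i, hi⟩
    have hc0 : c i₀ = 0 := by
      have hev := congrFun hsum (r i₀)
      simp only [Finset.sum_apply, Pi.smul_apply, smul_eq_mul, Pi.zero_apply] at hev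
      rw [Finset.sum_eq_single i₀] at hev
      · rcases mul_eq_zero.mp hev with h | h
        · exact h
        · exact absurd h (h1 i₀)
      · intro b hb hbne
        have hlt : (r i₀ : ℕ) < (r b : ℕ) :=
          lt_of_le_of_ne (hmin b hb) (fun h => hbne (hr (Fin.ext h.symm)))
        rw [h0 b (r i₀) hlt, mul_zero]
      · intro h; exact absurd hi₀ h
    rcases eq_or_ne i i₀ with rfl | hne'
    · exact hc0
    · refine ih _ (Finset.erase_ssubset hi₀) c ?_ i (Finset.mem_erase.mpr ⟨hne', hi⟩)
      rw [← hsum, Finset.sum_erase_eq_sub hi₀, hc0, zero_smul, sub_zero]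

theorem rref_rank {F : Type*} [Field F] {k n : ℕ} (M : Matrix (Fin k) (Fin n) F)
    (p : Fin k → Fin n) (hM : IsRREF M p) :
    finrank F ↥(Submodule.span F (Set.range fun i => M i)) = k := by
  have hli : LinearIndependent F (fun i => M i) := by
    refine li_of_leading _ p hM.1.injective (fun i => ?_) (fun i j hj => hM.2.2.1 i j hj)
    rw [hM.2.1 i]; exact one_ne_zero
  rw [finrank_span_eq_card hli, Fintype.card_fin]

/-- For `k`-dimensional subspaces `U, V` of `F_q^n`, the subspace distance is at
least the Hamming distance of their identifying vectors. -/
theorem stmt5 (F : Type*) [Field F] [Fintype F] (n k : ℕ)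
    (U V : Submodule F (Fin n → F))
    (M N : Matrix (Fin k) (Fin n) F) (p q : Fin k → Fin n)
    (hM : IsRREF M p) (hN : IsRREF N q)
    (hU : Submodule.span F (Set.range fun i => M i) = U)
    (hV : Submodule.span F (Set.range fun i => N i) = V) :
    hammingDist (pivotVec p) (pivotVec q)
      ≤ finrank F ↥(U ⊔ V) - finrank F ↥(U ⊓ V) := by
  classical
  set P : Finset (Fin n) := Finset.image p Finset.univ with hP
  set Q : Finset (Fin n) := Finset.image q Finset.univ with hQ
  -- Hamming distance is the cardinality of the symmetric difference
  have hham : hammingDist (pivotVec p) (pivotVec q) = ((P ∪ Q) \ (P ∩ Q)).card := by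
    unfold hammingDist
    congr 1
    ext j
    simp only [Finset.mem_filter, Finset.mem_univ, true_and, Finset.mem_sdiff,
      Finset.mem_union, Finset.mem_inter, hP, hQ, Finset.mem_image, pivotVec,
      ne_eq, decide_eq_decide]
    tauto
  have hsdiff : ((P ∪ Q) \ (P ∩ Q)).card + (P ∩ Q).card = (P ∪ Q).card :=
    Finset.card_sdiff_add_card_eq_card (Finset.inter_subset_union)
  have hPc : P.card = k := by
    rw [hP, Finset.card_image_of_injective _ hM.1.injective, Finset.card_univ, Fintype.card_fin]
  have hQc : Q.card = k := by
    rw [hQ, Finset.card_image_of_injective _ hN.1.injective, Finset.card_univ, Fintype.card_fin]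
  have hui : (P ∪ Q).card + (P ∩ Q).card = k + k := by
    rw [Finset.card_union_add_card_inter, hPc, hQc]
  -- rank facts
  have hrU : finrank F ↥U = k := hU ▸ rref_rank M p hM
  have hrV : finrank F ↥V = k := hV ▸ rref_rank N q hN
  have hranks : finrank F ↥(U ⊔ V) + finrank F ↥(U ⊓ V) = k + k := by
    rw [Submodule.finrank_sup_add_finrank_inf_eq, hrU, hrV]
  -- |P ∪ Q| ≤ finrank (U ⊔ V)
  have key : ∀ j : {j // j ∈ P ∪ Q}, ∃ v : Fin n → F, v ∈ U ⊔ V ∧ v j.1 ≠ 0 ∧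
      ∀ (j' : Fin n), (j' : ℕ) < (j.1 : ℕ) → v j' = 0 := by
    rintro ⟨j, hj⟩
    rcases Finset.mem_union.mp hj with hj | hj
    · obtain ⟨i, -, rfl⟩ := Finset.mem_image.mp hj
      exact ⟨M i, Submodule.mem_sup_left (hU ▸ Submodule.subset_span ⟨i, rfl⟩),
        by rw [hM.2.1 i]; exact one_ne_zero, fun j' h => hM.2.2.1 i j' h⟩
    · obtain ⟨i, -, rfl⟩ := Finset.mem_image.mp hj
      exact ⟨N i, Submodule.mem_sup_right (hV ▸ Submodule.subset_span ⟨i, rfl⟩),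
        by rw [hN.2.1 i]; exact one_ne_zero, fun j' h => hN.2.2.1 i j' h⟩
  choose w hwmem hw1 hw0 using key
  have hli : LinearIndependent F w :=
    li_of_leading w (fun j => j.1) Subtype.val_injective hw1 hw0
  have hli' : LinearIndependent F (fun j => (⟨w j, hwmem j⟩ : ↥(U ⊔ V))) :=
    LinearIndependent.of_comp ((U ⊔ V).subtype) hli
  have hcard := hli'.fintype_card_le_finrank
  rw [Fintype.card_coe] at hcard
  omega
end

section
/- For any two k-dimensional subspaces U, V of F_q^n, the subspace distance is at least the Hamming distance of their inverse identifying vectors: d_S(U,V) ≥ d_H(ī(U), ī(V)). -/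
set_option maxHeartbeats 800000


open Module

/-- `M` is in reduced row inverse echelon form with pivot columns given by `p`
(pivots proceed from right to left). -/
def IsInvRREF {F : Type*} [Field F] {k n : ℕ}
    (M : Matrix (Fin k) (Fin n) F) (p : Fin k → Fin n) : Prop :=
  StrictAnti p ∧ (∀ i, M i (p i) = 1) ∧
    (∀ (i : Fin k) (j : Fin n), (p i : ℕ) < (j : ℕ) → M i j = 0) ∧
    (∀ i i', i' ≠ i → M i' (p i) = 0)

/-- The rightmost nonzero coordinate of a nonzero vector in the row span is a pivot. -/
lemma lead_mem_range {F : Type*} [Field F] {k n : ℕ}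
    {M : Matrix (Fin k) (Fin n) F} {p : Fin k → Fin n} (hM : IsInvRREF M p)
    {v : Fin n → F} (hv : v ∈ Submodule.span F (Set.range fun i => M i))
    {j : Fin n} (hj : v j ≠ 0) (hj' : ∀ j', j < j' → v j' = 0) :
    ∃ i, p i = j := by
  classical
  obtain ⟨c, hc⟩ := Submodule.mem_span_range_iff_exists_fun F |>.mp hv
  have hvj : ∀ j' : Fin n, v j' = ∑ i, c i * M i j' := by
    intro j'
    rw [← hc]
    simp [Finset.sum_apply]
  set I : Finset (Fin k) := Finset.univ.filter (fun i => c i ≠ 0) with hI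
  rcases I.eq_empty_or_nonempty with hIe | hIne
  · exfalso
    apply hj
    rw [hvj]
    apply Finset.sum_eq_zero
    intro i _
    have : c i = 0 := by
      by_contra hci
      have : i ∈ I := by simp [hI, hci]
      simp [hIe] at this
    simp [this]
  · set i0 := I.min' hIne with hi0
    have hci0 : c i0 ≠ 0 := by
      have := I.min'_mem hIne
      simpa [hI] using this
    have hvpi0 : v (p i0) = c i0 := by
      rw [hvj]
      rw [Finset.sum_eq_single i0]
      · rw [hM.2.1 i0, mul_one]
      · intro b _ hb
        rw [hM.2.2.2 i0 b hb, mul_zero]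
      · intro h; exact absurd (Finset.mem_univ i0) h
    have h1 : ¬ j < p i0 := by
      intro h
      exact hci0 (hvpi0 ▸ hj' _ h)
    have h2 : ¬ p i0 < j := by
      intro h
      apply hj
      rw [hvj]
      apply Finset.sum_eq_zero
      intro i _
      by_cases hci : c i = 0
      · simp [hci]
      · have hiI : i ∈ I := by simp [hI, hci]
        have : i0 ≤ i := I.min'_le i hiI
        have hpi : p i ≤ p i0 := hM.1.antitone this
        have : (p i : ℕ) < (j : ℕ) := lt_of_le_of_lt hpi h
        rw [hM.2.2.1 i j this, mul_zero]
    exact ⟨i0, le_antisymm (not_lt.mp h1) (not_lt.mp h2)⟩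

lemma rows_li {F : Type*} [Field F] {k n : ℕ}
    {M : Matrix (Fin k) (Fin n) F} {p : Fin k → Fin n} (hM : IsInvRREF M p) :
    LinearIndependent F (fun i => M i) := by
  rw [Fintype.linearIndependent_iff]
  intro c hc i
  have := congrFun hc (p i)
  simp only [Finset.sum_apply, Pi.smul_apply, smul_eq_mul, Pi.zero_apply] at this
  rw [Finset.sum_eq_single i] at this
  · rwa [hM.2.1 i, mul_one] at this
  · intro b _ hb
    rw [hM.2.2.2 i b hb, mul_zero]
  · intro h; exact absurd (Finset.mem_univ i) h

/-- For `k`-dimensional subspaces `U, V` of `F_q^n`, the subspace distance is at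
least the Hamming distance of their inverse identifying vectors. -/
theorem stmt6 (F : Type*) [Field F] [Fintype F] (n k : ℕ)
    (U V : Submodule F (Fin n → F))
    (M N : Matrix (Fin k) (Fin n) F) (p q : Fin k → Fin n)
    (hM : IsInvRREF M p) (hN : IsInvRREF N q)
    (hU : Submodule.span F (Set.range fun i => M i) = U)
    (hV : Submodule.span F (Set.range fun i => N i) = V) :
    hammingDist (pivotVec p) (pivotVec q)
      ≤ finrank F ↥(U ⊔ V) - finrank F ↥(U ⊓ V) := by
  classical
  set P : Finset (Fin n) := Finset.univ.image p with hP
  set Q : Finset (Fin n) := Finset.univ.image q with hQ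
  have hpinj : Function.Injective p := hM.1.injective
  have hqinj : Function.Injective q := hN.1.injective
  have hPcard : P.card = k := by
    rw [hP, Finset.card_image_of_injective _ hpinj, Finset.card_univ, Fintype.card_fin]
  have hQcard : Q.card = k := by
    rw [hQ, Finset.card_image_of_injective _ hqinj, Finset.card_univ, Fintype.card_fin]
  -- the key vanishing lemma
  have key : ∀ v ∈ U ⊓ V, (∀ j ∈ P ∩ Q, v j = 0) → v = 0 := by
    intro v hvm hvz
    by_contra hv0
    have hsupp : (Finset.univ.filter (fun j => v j ≠ 0)).Nonempty := by
      obtain ⟨j, hj⟩ := Function.ne_iff.mp hv0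
      exact ⟨j, Finset.mem_filter.mpr ⟨Finset.mem_univ _, by simpa using hj⟩⟩
    set j := (Finset.univ.filter (fun j => v j ≠ 0)).max' hsupp with hjdef
    have hj : v j ≠ 0 := by
      have := Finset.max'_mem _ hsupp
      simpa using this
    have hj' : ∀ j', j < j' → v j' = 0 := by
      intro j' hlt
      by_contra hne
      have : j' ∈ Finset.univ.filter (fun j => v j ≠ 0) := by simp [hne]
      exact absurd (Finset.le_max' _ j' this) (not_le.mpr hlt)
    have hvU : v ∈ Submodule.span F (Set.range fun i => M i) := hU ▸ hvm.1
    have hvV : v ∈ Submodule.span F (Set.range fun i => N i) := hV ▸ hvm.2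
    obtain ⟨i1, hi1⟩ := lead_mem_range hM hvU hj hj'
    obtain ⟨i2, hi2⟩ := lead_mem_range hN hvV hj hj'
    apply hj
    apply hvz
    rw [Finset.mem_inter]
    exact ⟨Finset.mem_image.mpr ⟨i1, Finset.mem_univ _, hi1⟩,
      Finset.mem_image.mpr ⟨i2, Finset.mem_univ _, hi2⟩⟩
  -- finrank (U ⊓ V) ≤ (P ∩ Q).card
  have hinf_le : finrank F ↥(U ⊓ V) ≤ (P ∩ Q).card := by
    have hfin : finrank F ((↥(P ∩ Q) : Type _) → F) = (P ∩ Q).card := by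
      rw [finrank_fintype_fun_eq_card, Fintype.card_coe]
    rw [← hfin]
    apply LinearMap.finrank_le_finrank_of_injective
      (f := (LinearMap.funLeft F F (fun j : ↥(P ∩ Q) => (j : Fin n))).comp (U ⊓ V).subtype)
    rw [← LinearMap.ker_eq_bot, LinearMap.ker_eq_bot']
    intro ⟨v, hvm⟩ hfv
    have hz : ∀ j ∈ P ∩ Q, v j = 0 := by
      intro j hjm
      exact congrFun hfv ⟨j, hjm⟩
    exact Subtype.ext (key v hvm hz)
  have hliM := rows_li hM
  have hliN := rows_li hN
  have hUrank : finrank F ↥U = k := by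
    rw [← hU, finrank_span_eq_card hliM, Fintype.card_fin]
  have hVrank : finrank F ↥V = k := by
    rw [← hV, finrank_span_eq_card hliN, Fintype.card_fin]
  have hsum : finrank F ↥(U ⊔ V) + finrank F ↥(U ⊓ V) = k + k := by
    rw [Submodule.finrank_sup_add_finrank_inf_eq, hUrank, hVrank]
  -- hamming distance computation
  have hham : hammingDist (pivotVec p) (pivotVec q) = ((P ∪ Q) \ (P ∩ Q)).card := by
    unfold hammingDist
    congr 1
    ext j
    have hp' : pivotVec p j = decide (j ∈ P) := by
      simp [pivotVec, hP, eq_comm]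
    have hq' : pivotVec q j = decide (j ∈ Q) := by
      simp [pivotVec, hQ, eq_comm]
    simp only [Finset.mem_filter, Finset.mem_univ, true_and, hp', hq',
      Finset.mem_sdiff, Finset.mem_union, Finset.mem_inter]
    by_cases h1 : j ∈ P <;> by_cases h2 : j ∈ Q <;> simp [h1, h2]
  have hcard1 : ((P ∪ Q) \ (P ∩ Q)).card = (P ∪ Q).card - (P ∩ Q).card :=
    Finset.card_sdiff_of_subset (fun x hx => Finset.mem_union_left _ (Finset.mem_inter.mp hx).1)
  have hcard2 : (P ∪ Q).card + (P ∩ Q).card = P.card + Q.card :=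
    Finset.card_union_add_card_inter P Q
  have hle : (P ∩ Q).card ≤ (P ∪ Q).card :=
    Finset.card_le_card (fun x hx => Finset.mem_union_left _ (Finset.mem_inter.mp hx).1)
  omega
end

section
/- Let C₁ be a set of k-dimensional subspaces of F_q^n each having an identifying vector of weight k supported entirely in the first n₁ coordinates, and let C₂ be a set of k-dimensional subspaces each having identifying vector v with wt(v restricted to the first n₁ coordinates) ≤ k − δ. Then for any U ∈ C₁ and V ∈ C₂, d_S(U,V) ≥ 2δ. -/
open Module

/-- Projection onto the first `n₁` coordinates (zeroing the rest). -/
def projMap (F : Type*) [Field F] (n n₁ : ℕ) : (Fin n → F) →ₗ[F] (Fin n → F) where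
  toFun f j := if (j : ℕ) < n₁ then f j else 0
  map_add' f g := by funext j; by_cases h : (j : ℕ) < n₁ <;> simp [h]
  map_smul' c f := by funext j; by_cases h : (j : ℕ) < n₁ <;> simp [h]

/-- If every subspace in `C₁` has its identifying vector supported entirely in
the first `n₁` coordinates (with full weight `k`), and every subspace in `C₂`
has at most `k − δ` pivots among the first `n₁` coordinates, then any
`U ∈ C₁`, `V ∈ C₂` satisfy `d_S(U,V) ≥ 2δ`. -/
theorem stmt10 (F : Type*) [Field F] [Fintype F] (n n₁ k δ : ℕ) (hδ : δ ≤ k)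
    (C₁ C₂ : Set (Submodule F (Fin n → F)))
    (h₁ : ∀ U ∈ C₁, finrank F ↥U = k ∧
      ∃ (M : Matrix (Fin k) (Fin n) F) (p : Fin k → Fin n),
        IsRREF M p ∧ Submodule.span F (Set.range fun i => M i) = U ∧
        ∀ i, (p i : ℕ) < n₁)
    (h₂ : ∀ V ∈ C₂, finrank F ↥V = k ∧
      ∃ (N : Matrix (Fin k) (Fin n) F) (q : Fin k → Fin n),
        IsRREF N q ∧ Submodule.span F (Set.range fun i => N i) = V ∧
        (Finset.univ.filter fun i => (q i : ℕ) < n₁).card ≤ k - δ) :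
    ∀ U ∈ C₁, ∀ V ∈ C₂,
      2 * δ ≤ finrank F ↥(U ⊔ V) - finrank F ↥(U ⊓ V) := by
  classical
  intro U hU V hV
  obtain ⟨hUk, M, p, ⟨hpmono, hM1, hMlt, hMpiv⟩, hMspan, hp⟩ := h₁ U hU
  obtain ⟨hVk, N, q, ⟨hqmono, hN1, hNlt, hNpiv⟩, hNspan, hq⟩ := h₂ V hV
  set π := projMap F n n₁ with hπ
  -- π is injective on U
  have hinjU : ∀ x ∈ U, π x = 0 → x = 0 := by
    intro x hxU hx
    rw [← hMspan, Submodule.mem_span_range_iff_exists_fun] at hxU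
    obtain ⟨c, hc⟩ := hxU
    have hcoord : ∀ i, c i = 0 := by
      intro i
      have h1 : x (p i) = c i := by
        rw [← hc]
        simp only [Finset.sum_apply, Pi.smul_apply, smul_eq_mul]
        rw [Finset.sum_eq_single i]
        · rw [hM1 i, mul_one]
        · intro i' _ hne; rw [hMpiv i i' hne, mul_zero]
        · intro h; exact absurd (Finset.mem_univ i) h
      have h2 : π x (p i) = x (p i) := by
        simp [hπ, projMap, hp i]
      rw [hx] at h2
      simp only [Pi.zero_apply] at h2
      rw [← h1, ← h2]
    rw [← hc]
    simp [hcoord]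
  -- dim (U ⊓ V) ≤ dim (π V)
  have hres : ∀ x ∈ U ⊓ V, π x ∈ Submodule.map π V := by
    intro x hx
    exact Submodule.mem_map_of_mem hx.2
  have hinj : Function.Injective (π.restrict hres) := by
    rw [injective_iff_map_eq_zero]
    intro a ha
    have : π (a : Fin n → F) = 0 := by
      have := congrArg (Subtype.val) ha
      simpa [LinearMap.restrict_apply] using this
    exact Subtype.ext (hinjU a a.2.1 this)
  have hle1 : finrank F ↥(U ⊓ V) ≤ finrank F ↥(Submodule.map π V) :=
    LinearMap.finrank_le_finrank_of_injective hinj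
  -- dim (π V) ≤ k - δ
  set S : Finset (Fin k) := Finset.univ.filter fun i => (q i : ℕ) < n₁ with hS
  have hzero : ∀ i : Fin k, ¬ (q i : ℕ) < n₁ → π (N i) = 0 := by
    intro i hi
    funext j
    simp only [hπ, projMap, LinearMap.coe_mk, AddHom.coe_mk]
    by_cases hj : (j : ℕ) < n₁
    · simp only [hj, if_true]
      exact hNlt i j (by omega)
    · simp [hj]
  have hle2 : Submodule.map π V ≤
      Submodule.span F ((S.image fun i => π (N i)) : Set (Fin n → F)) := by
    rw [← hNspan, Submodule.map_span]
    apply Submodule.span_le.2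
    rintro _ ⟨_, ⟨i, rfl⟩, rfl⟩
    by_cases hi : (q i : ℕ) < n₁
    · apply Submodule.subset_span
      simp only [Finset.coe_image, Set.mem_image]
      exact ⟨i, by simp [hS, hi], rfl⟩
    · rw [hzero i hi]
      exact Submodule.zero_mem _
  have hle3 : finrank F ↥(Submodule.map π V) ≤ k - δ := by
    calc finrank F ↥(Submodule.map π V)
        ≤ finrank F ↥(Submodule.span F
            ((S.image fun i => π (N i)) : Set (Fin n → F))) :=
          Submodule.finrank_mono hle2
      _ ≤ (S.image fun i => π (N i)).card := finrank_span_finset_le_card _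
      _ ≤ S.card := Finset.card_image_le
      _ ≤ k - δ := hq
  have hinter : finrank F ↥(U ⊓ V) ≤ k - δ := le_trans hle1 hle3
  have hsum := Submodule.finrank_sup_add_finrank_inf_eq U V
  rw [hUk, hVk] at hsum
  omega
end

section
/- (Multilevel construction distance bound) Let S be a set of binary vectors of length n and weight k with pairwise Hamming distance at least 2δ. For each v ∈ S let C_v be a set of k-dimensional subspaces of F_q^n all having identifying vector v and pairwise subspace distance at least 2δ within C_v. Then ∪_{v∈S} C_v has pairwise subspace distance at least 2δ and cardinality Σ_{v∈S} |C_v|. -/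
open Module

/-- The subspace distance on subspaces of `F_q^n`. -/
noncomputable def subDist {F : Type*} [Field F] {n : ℕ} (U V : Submodule F (Fin n → F)) : ℕ :=
  finrank F ↥(U ⊔ V) - finrank F ↥(U ⊓ V)

/-- Hamming weight of a binary vector. -/
def wtB {ι : Type*} [Fintype ι] (x : ι → Bool) : ℕ :=
  (Finset.univ.filter fun i => x i = true).card

/-- `U` has identifying vector `v` (indicator of the pivot columns of its RREF
generator matrix, with `k` rows). -/
def HasIdVec {F : Type*} [Field F] {n : ℕ} (k : ℕ)
    (U : Submodule F (Fin n → F)) (v : Fin n → Bool) : Prop :=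
  ∃ (M : Matrix (Fin k) (Fin n) F) (p : Fin k → Fin n),
    IsRREF M p ∧ Submodule.span F (Set.range fun i => M i) = U ∧
      ∀ j, v j = decide (∃ i, p i = j)

section Aux

variable {F : Type*} [Field F] {n : ℕ}

/-- `j` is a leading index of `W`: some element of `W` has first nonzero coordinate `j`. -/
def IsLead (W : Submodule F (Fin n → F)) (j : Fin n) : Prop :=
  ∃ u ∈ W, u j ≠ 0 ∧ ∀ j' < j, u j' = 0

theorem isLead_iff {k : ℕ} {M : Matrix (Fin k) (Fin n) F} {p : Fin k → Fin n}
    {U : Submodule F (Fin n → F)}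
    (hM : IsRREF M p) (hspan : Submodule.span F (Set.range fun i => M i) = U)
    (j : Fin n) : IsLead U j ↔ ∃ i, p i = j := by
  obtain ⟨hmono, hone, hlt, hcol⟩ := hM
  constructor
  · rintro ⟨u, huU, huj, hu0⟩
    rw [← hspan, Submodule.mem_span_range_iff_exists_fun] at huU
    obtain ⟨c, hc⟩ := huU
    classical
    have hsum : ∀ j' : Fin n, u j' = ∑ i, c i * M i j' := by
      intro j'
      rw [← hc]
      simp [Finset.sum_apply]
    set T : Finset (Fin k) := Finset.univ.filter fun i => c i ≠ 0 with hT
    have hTne : T.Nonempty := by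
      by_contra h
      apply huj
      rw [hsum]
      apply Finset.sum_eq_zero
      intro i _
      have : c i = 0 := by
        by_contra hci
        exact h ⟨i, by simp [hT, hci]⟩
      simp [this]
    set i₀ := T.min' hTne with hi₀
    have hi₀T : i₀ ∈ T := T.min'_mem hTne
    have hci₀ : c i₀ ≠ 0 := by simpa [hT] using hi₀T
    have hupi₀ : u (p i₀) = c i₀ := by
      rw [hsum, Finset.sum_eq_single i₀]
      · simp [hone i₀]
      · intro i _ hi
        rw [hcol i₀ i hi, mul_zero]
      · simp
    rcases lt_trichotomy (p i₀) j with h | h | h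
    · exact absurd (hu0 _ h) (hupi₀ ▸ hci₀)
    · exact ⟨i₀, h⟩
    · exfalso
      apply huj
      rw [hsum]
      apply Finset.sum_eq_zero
      intro i _
      by_cases hci : c i = 0
      · simp [hci]
      · have hiT : i ∈ T := by simp [hT, hci]
        have : i₀ ≤ i := T.min'_le i hiT
        have : p i₀ ≤ p i := hmono.monotone this
        rw [hlt i j (lt_of_lt_of_le h this), mul_zero]
  · rintro ⟨i, rfl⟩
    refine ⟨M i, ?_, by simp [hone i], fun j' hj' => hlt i j' hj'⟩
    rw [← hspan]
    exact Submodule.subset_span ⟨i, rfl⟩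

open Classical in
/-- The dimension of a subspace is at most the number of its leading indices. -/
theorem finrank_le_card_lead [Fintype F] (W : Submodule F (Fin n → F)) :
    finrank F ↥W ≤ (Finset.univ.filter fun j => IsLead W j).card := by
  classical
  set T := Finset.univ.filter fun j => IsLead W j with hT
  let φ : ↥W →ₗ[F] ({j // j ∈ T} → F) :=
    { toFun := fun w j => (w : Fin n → F) j.val
      map_add' := fun _ _ => rfl
      map_smul' := fun _ _ => rfl }
  have hinj : Function.Injective φ := by
    rw [injective_iff_map_eq_zero]
    intro w hw
    by_contra hne
    have hwne : (w : Fin n → F) ≠ 0 := by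
      simpa [Submodule.coe_eq_zero] using hne
    have : ∃ j, (w : Fin n → F) j ≠ 0 := by
      by_contra h
      push_neg at h
      exact hwne (funext h)
    obtain ⟨j, hj⟩ := this
    set s : Finset (Fin n) := Finset.univ.filter fun j => (w : Fin n → F) j ≠ 0 with hs
    have hsne : s.Nonempty := ⟨j, by simp [hs, hj]⟩
    set j₀ := s.min' hsne with hj₀
    have hj₀s : j₀ ∈ s := s.min'_mem hsne
    have hwj₀ : (w : Fin n → F) j₀ ≠ 0 := by simpa [hs] using hj₀s
    have hlead : IsLead W j₀ := by
      refine ⟨w, w.2, hwj₀, fun j' hj' => ?_⟩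
      by_contra h
      exact absurd (s.min'_le j' (by simp [hs, h])) (not_le.mpr hj')
    have hj₀T : j₀ ∈ T := by simp [hT, hlead]
    have := congrFun hw ⟨j₀, hj₀T⟩
    exact hwj₀ this
  calc finrank F ↥W ≤ finrank F ({j // j ∈ T} → F) :=
        LinearMap.finrank_le_finrank_of_injective hinj
    _ = T.card := by rw [finrank_pi, Fintype.card_coe]

end Aux

open Classical in
/-- Multilevel construction distance bound: if `S` is a binary constant-weight
code of weight `k` and minimum Hamming distance `2δ`, and for each `v ∈ S` the
code `C v` consists of `k`-dimensional subspaces with identifying vector `v`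
and pairwise subspace distance at least `2δ`, then `∪_{v∈S} C v` has pairwise
subspace distance at least `2δ` and cardinality `Σ_{v∈S} |C v|`. -/
theorem stmt15 (F : Type*) [Field F] [Fintype F] (n k δ : ℕ)
    (S : Finset (Fin n → Bool))
    (hSw : ∀ v ∈ S, wtB v = k)
    (hSd : ∀ v ∈ S, ∀ w ∈ S, v ≠ w → 2 * δ ≤ hammingDist v w)
    (C : (Fin n → Bool) → Finset (Submodule F (Fin n → F)))
    (hCk : ∀ v ∈ S, ∀ U ∈ C v, finrank F ↥U = k ∧ HasIdVec k U v)
    (hCd : ∀ v ∈ S, ∀ U ∈ C v, ∀ V ∈ C v, U ≠ V → 2 * δ ≤ subDist U V) :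
    (∀ U ∈ S.biUnion C, ∀ V ∈ S.biUnion C, U ≠ V → 2 * δ ≤ subDist U V) ∧
    (S.biUnion C).card = ∑ v ∈ S, (C v).card := by
  classical
  -- identifying vector gives the leading indices
  have hid : ∀ (U : Submodule F (Fin n → F)) (v : Fin n → Bool), HasIdVec k U v →
      ∀ j, v j = true ↔ IsLead U j := by
    rintro U v ⟨M, p, hM, hspan, hv⟩ j
    rw [hv j, isLead_iff hM hspan]
    simp
  -- uniqueness of the identifying vector
  have huniq : ∀ (U : Submodule F (Fin n → F)) (v w : Fin n → Bool),
      HasIdVec k U v → HasIdVec k U w → v = w := by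
    intro U v w hv hw
    funext j
    have h1 := hid U v hv j
    have h2 := hid U w hw j
    rcases Bool.eq_false_or_eq_true (v j) with h | h <;>
      rcases Bool.eq_false_or_eq_true (w j) with h' | h' <;>
      simp_all
  constructor
  · -- distance bound
    intro U hU V hV hUV
    rw [Finset.mem_biUnion] at hU hV
    obtain ⟨v, hvS, hUv⟩ := hU
    obtain ⟨w, hwS, hVw⟩ := hV
    by_cases hvw : v = w
    · exact hCd w hwS U (hvw ▸ hUv) V hVw hUV
    · obtain ⟨hUk, hUid⟩ := hCk v hvS U hUv
      obtain ⟨hVk, hVid⟩ := hCk w hwS V hVw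
      set A : Finset (Fin n) := Finset.univ.filter fun j => v j = true with hA
      set B : Finset (Fin n) := Finset.univ.filter fun j => w j = true with hB
      have hAcard : A.card = k := hSw v hvS
      have hBcard : B.card = k := hSw w hwS
      -- hamming distance identity
      have hham : hammingDist v w + 2 * (A ∩ B).card = A.card + B.card := by
        have h1 : hammingDist v w = ((A ∪ B) \ (A ∩ B)).card := by
          rw [hammingDist]
          congr 1
          ext j
          simp only [hammingDist, Finset.mem_filter, Finset.mem_sdiff, Finset.mem_union,
            Finset.mem_inter, Finset.mem_univ, true_and, hA, hB]
          rcases Bool.eq_false_or_eq_true (v j) with h | h <;>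
            rcases Bool.eq_false_or_eq_true (w j) with h' | h' <;> simp [h, h']
        have h2 : (A ∩ B).card ≤ (A ∪ B).card :=
          Finset.card_le_card Finset.inter_subset_union
        have h3 := Finset.card_union_add_card_inter A B
        rw [h1, Finset.card_sdiff_of_subset (Finset.inter_subset_union)]
        omega
      -- dim(U ⊓ V) ≤ |A ∩ B|
      have hdinf : finrank F ↥(U ⊓ V) ≤ (A ∩ B).card := by
        refine le_trans (finrank_le_card_lead (U ⊓ V)) (Finset.card_le_card ?_)
        intro j hj
        rw [Finset.mem_filter] at hj
        obtain ⟨-, u, huW, hu⟩ := hj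
        rw [Submodule.mem_inf] at huW
        simp only [Finset.mem_inter, hA, hB, Finset.mem_filter, Finset.mem_univ, true_and]
        exact ⟨(hid U v hUid j).mpr ⟨u, huW.1, hu⟩, (hid V w hVid j).mpr ⟨u, huW.2, hu⟩⟩
      have hsup : finrank F ↥(U ⊔ V) + finrank F ↥(U ⊓ V) = k + k := by
        rw [Submodule.finrank_sup_add_finrank_inf_eq, hUk, hVk]
      have hhd := hSd v hvS w hwS hvw
      rw [subDist]
      omega
  · -- cardinality
    refine Finset.card_biUnion ?_
    intro v hv w hw hvw
    rw [Function.onFun, Finset.disjoint_left]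
    intro U hUv hUw
    exact hvw (huniq U v w (hCk v hv U hUv).2 (hCk w hw U hUw).2)
end

section
/- Suppose V is a k-dimensional subspace of F_q^n with generator matrix whose last μ₂ columns form a matrix V₂ with rank(V₂) = a₂ + r, where a₂ = wt(v̄₂) and r ≤ a₁ − δ with a₁ + a₂ = k and a₁ ≥ δ. If U is a k-dimensional subspace contained in {0} × F_q^{μ₂} (i.e., supported on the last μ₂ coordinates), then d_S(U,V) ≥ 2δ. -/
open Module

/-- Suppose `V` is a `k`-dimensional subspace with generator matrix whose last
`μ₂` columns form `V₂` with `rank(V₂) = a₂ + r`, where `a₁ + a₂ = k`,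
`a₁ ≥ δ` and `r ≤ a₁ − δ`. If `U` is a `k`-dimensional subspace supported on
the last `μ₂` coordinates, then `d_S(U,V) ≥ 2δ`. -/
theorem stmt17 (F : Type*) [Field F] [Fintype F] (m μ₂ k a₁ a₂ r δ : ℕ)
    (hk : a₁ + a₂ = k) (ha₁ : δ ≤ a₁) (hr : r ≤ a₁ - δ)
    (U V : Submodule F (Fin m ⊕ Fin μ₂ → F))
    (M : Matrix (Fin k) (Fin m ⊕ Fin μ₂) F)
    (hMV : Submodule.span F (Set.range fun i => M i) = V)
    (hV : finrank F ↥V = k)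
    (hrank : (M.submatrix id Sum.inr).rank = a₂ + r)
    (hU : finrank F ↥U = k)
    (hUsupp : ∀ x ∈ U, ∀ j : Fin m, x (Sum.inl j) = 0) :
    2 * δ ≤ finrank F ↥(U ⊔ V) - finrank F ↥(U ⊓ V) := by
  classical
  set f : (Fin m ⊕ Fin μ₂ → F) →ₗ[F] (Fin μ₂ → F) := LinearMap.funLeft F F Sum.inr with hf
  set W : Submodule F (Fin μ₂ → F) :=
    Submodule.span F (Set.range fun i => (M.submatrix id Sum.inr) i) with hW
  -- f maps U ⊓ V into W
  have hmem : ∀ x : ↥(U ⊓ V), f (x : Fin m ⊕ Fin μ₂ → F) ∈ W := by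
    rintro ⟨x, hxU, hxV⟩
    have hx : x ∈ Submodule.span F (Set.range fun i => M i) := by rw [hMV]; exact hxV
    have : f x ∈ Submodule.map f (Submodule.span F (Set.range fun i => M i)) :=
      Submodule.mem_map_of_mem hx
    rw [Submodule.map_span] at this
    refine Submodule.span_mono ?_ this
    rintro y ⟨z, ⟨i, rfl⟩, rfl⟩
    exact ⟨i, rfl⟩
  -- the restricted map
  let g : ↥(U ⊓ V) →ₗ[F] ↥W := LinearMap.codRestrict W (f.domRestrict (U ⊓ V)) hmem
  have hginj : Function.Injective g := by
    rw [← LinearMap.ker_eq_bot, LinearMap.ker_eq_bot']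
    rintro ⟨x, hxU, hxV⟩ hx0
    have hx0' : f x = 0 := congrArg Subtype.val hx0
    ext
    apply congrFun
    show x = 0
    funext j
    cases j with
    | inl j => exact hUsupp x hxU j
    | inr j => exact congrFun hx0' j
  have hdim : finrank F ↥(U ⊓ V) ≤ finrank F ↥W :=
    LinearMap.finrank_le_finrank_of_injective hginj
  have hWrank : finrank F ↥W = a₂ + r := by
    rw [← hrank, Matrix.rank_eq_finrank_span_row]
    rfl
  have hinf : finrank F ↥(U ⊓ V) ≤ a₂ + r := hWrank ▸ hdim
  have hsum : finrank F ↥(U ⊔ V) + finrank F ↥(U ⊓ V) = k + k := by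
    rw [Submodule.finrank_sup_add_finrank_inf_eq, hU, hV]
  omega
end

section
/- For positive integers m ≥ n ≥ d and a Ferrers diagram F = [γ₁, …, γ_n] of size m × n in which each of the rightmost d − 1 columns has at least n dots (γ_{n−d+2}, …, γ_n ≥ n), the Singleton-like bound min_i{v_i} from Lemma (Etzion–Silberstein) equals Σ_{i=1}^{n−d+1} γ_i, where v_i is the number of dots of F remaining after deleting the top i rows and rightmost d−1−i columns. -/
/-- For a Ferrers diagram `F = [γ₀, …, γ_{n−1}]` of size `m × n` (columns
indexed from 0, `γ` monotone, `γ_{n−1} = m`, `m ≥ n ≥ d`) in which each of the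
rightmost `d − 1` columns has at least `n` dots, the Singleton-like bound
`min_{0 ≤ i ≤ d−1} v_i` equals `Σ_{j=0}^{n−d} γ_j`, where
`v_i = Σ_{j < n−d+1+i} (γ_j − i)` is the number of dots remaining after
deleting the top `i` rows and the rightmost `d−1−i` columns. -/
theorem stmt18 (m n d : ℕ) (hd1 : 1 ≤ d) (hdn : d ≤ n) (hnm : n ≤ m)
    (γ : ℕ → ℕ)
    (hmono : ∀ i j, i ≤ j → j < n → γ i ≤ γ j)
    (h1 : 1 ≤ γ 0)
    (htop : γ (n - 1) = m)
    (hbd : ∀ j < n, γ j ≤ m)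
    (hcols : ∀ j, n - d + 1 ≤ j → j < n → n ≤ γ j) :
    (Finset.range d).inf' (Finset.nonempty_range_iff.mpr (by omega))
        (fun i => ∑ j ∈ Finset.range (n - d + 1 + i), (γ j - i))
      = ∑ j ∈ Finset.range (n - d + 1), γ j := by
  set k := n - d + 1 with hk
  apply le_antisymm
  · have h0 : (0 : ℕ) ∈ Finset.range d := Finset.mem_range.mpr (by omega)
    have := Finset.inf'_le
      (fun i => ∑ j ∈ Finset.range (k + i), (γ j - i)) h0
    exact this.trans_eq (by simp)
  · apply Finset.le_inf'
    intro i hi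
    simp only [Finset.mem_range] at hi
    -- split the sum
    have hsplit : ∑ j ∈ Finset.range (k + i), (γ j - i)
        = ∑ j ∈ Finset.range k, (γ j - i)
          + ∑ j ∈ Finset.Ico k (k + i), (γ j - i) := by
      rw [← Finset.sum_range_add_sum_Ico _ (Nat.le_add_right k i)]
    have hA : ∑ j ∈ Finset.range k, γ j
        ≤ ∑ j ∈ Finset.range k, (γ j - i) + i * k := by
      have : ∑ j ∈ Finset.range k, γ j
          ≤ ∑ j ∈ Finset.range k, ((γ j - i) + i) :=
        Finset.sum_le_sum fun j _ => le_tsub_add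
      simpa [Finset.sum_add_distrib, mul_comm] using this
    have hB : i * k ≤ ∑ j ∈ Finset.Ico k (k + i), (γ j - i) := by
      have : ∑ j ∈ Finset.Ico k (k + i), k
          ≤ ∑ j ∈ Finset.Ico k (k + i), (γ j - i) := by
        apply Finset.sum_le_sum
        intro j hj
        simp only [Finset.mem_Ico] at hj
        have hjn : j < n := by omega
        have := hcols j (by omega) hjn
        omega
      simpa [Nat.Ico_eq_range', mul_comm] using this
    calc ∑ j ∈ Finset.range k, γ j
        ≤ ∑ j ∈ Finset.range k, (γ j - i) + i * k := hA
      _ ≤ ∑ j ∈ Finset.range k, (γ j - i)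
          + ∑ j ∈ Finset.Ico k (k + i), (γ j - i) := by omega
      _ = ∑ j ∈ Finset.range (k + i), (γ j - i) := hsplit.symm
end
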